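/- arXiv:2212.07045 — 3 statements merged into one kernel-verified Lean document; each statement's English description precedes it below -/
import Mathlib

section
/- Let x and y be bounded operators on a Hilbert space H = H₁ ⊕ H₂ ⊕ H₃, written in 3×3 block form. Suppose the only nonzero blocks of x are among indices {1,2}×{1,2} and the only nonzero blocks of y are among {2,3}×{2,3}. If ‖x − y‖ ≤ ε, then the operator z whose only nonzero block is the (2,2)-block (x_{2,2} + y_{2,2})/2 satisfies ‖x − z‖ ≤ 4ε and ‖y − z‖ ≤ 4ε. -/
lemma proj_norm_le_one {H : Type*} [NormedAddCommGroup H] [InnerProductSpace ℂ H]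
    [CompleteSpace H] (P : H →L[ℂ] H) (hsa : IsSelfAdjoint P) (hP : P * P = P) :
    ‖P‖ ≤ 1 := by
  have h := CStarRing.norm_star_mul_self (x := P)
  rw [hsa.star_eq, hP] at h
  nlinarith [norm_nonneg P]

lemma block_norm_le {H : Type*} [NormedAddCommGroup H] [InnerProductSpace ℂ H]
    [CompleteSpace H] (P Q a : H →L[ℂ] H) (hP : ‖P‖ ≤ 1) (hQ : ‖Q‖ ≤ 1) :
    ‖P * a * Q‖ ≤ ‖a‖ := by
  calc ‖P * a * Q‖ ≤ ‖P * a‖ * ‖Q‖ := norm_mul_le _ _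
    _ ≤ ‖P * a‖ := mul_le_of_le_one_right (norm_nonneg _) hQ
    _ ≤ ‖P‖ * ‖a‖ := norm_mul_le _ _
    _ ≤ 1 * ‖a‖ := mul_le_mul_of_nonneg_right hP (norm_nonneg a)
    _ = ‖a‖ := one_mul _

lemma norm_add4_le {H : Type*} [NormedAddCommGroup H] (A B C D : H) :
    ‖A + B + C + D‖ ≤ ‖A‖ + ‖B‖ + ‖C‖ + ‖D‖ := by
  calc ‖A + B + C + D‖ ≤ ‖A + B + C‖ + ‖D‖ := norm_add_le _ _
    _ ≤ ‖A + B‖ + ‖C‖ + ‖D‖ := by gcongr; exact norm_add_le _ _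
    _ ≤ ‖A‖ + ‖B‖ + ‖C‖ + ‖D‖ := by gcongr; exact norm_add_le _ _

/-- The complete intersection approximation (CIA) property for corner subalgebras:
if x is supported on the blocks {1,2}×{1,2}, y is supported on {2,3}×{2,3} and
‖x − y‖ ≤ ε, then the middle compression z = P₂((x+y)/2)P₂ is 4ε-close to both. -/
theorem block_CIA_property
    {H : Type*} [NormedAddCommGroup H] [InnerProductSpace ℂ H] [CompleteSpace H]
    (P₁ P₂ P₃ x y : H →L[ℂ] H) (ε : ℝ)
    (h₁sa : IsSelfAdjoint P₁) (h₂sa : IsSelfAdjoint P₂) (h₃sa : IsSelfAdjoint P₃)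
    (h₁ : P₁ * P₁ = P₁) (h₂ : P₂ * P₂ = P₂) (h₃ : P₃ * P₃ = P₃)
    (h₁₂ : P₁ * P₂ = 0) (h₁₃ : P₁ * P₃ = 0) (h₂₃ : P₂ * P₃ = 0)
    (h₂₁ : P₂ * P₁ = 0) (h₃₁ : P₃ * P₁ = 0) (h₃₂ : P₃ * P₂ = 0)
    (hsum : P₁ + P₂ + P₃ = 1)
    (hx : (P₁ + P₂) * x * (P₁ + P₂) = x) (hy : (P₂ + P₃) * y * (P₂ + P₃) = y)
    (hxy : ‖x - y‖ ≤ ε) :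
    ‖x - (2 : ℂ)⁻¹ • (P₂ * (x + y) * P₂)‖ ≤ 4 * ε ∧
    ‖y - (2 : ℂ)⁻¹ • (P₂ * (x + y) * P₂)‖ ≤ 4 * ε := by
  have hε : 0 ≤ ε := le_trans (norm_nonneg _) hxy
  have n1 := proj_norm_le_one P₁ h₁sa h₁
  have n2 := proj_norm_le_one P₂ h₂sa h₂
  have n3 := proj_norm_le_one P₃ h₃sa h₃
  have hQ3 : (P₁ + P₂) * P₃ = 0 := by rw [add_mul, h₁₃, h₂₃, add_zero]
  have h3Q : P₃ * (P₁ + P₂) = 0 := by rw [mul_add, h₃₁, h₃₂, add_zero]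
  have h1R : P₁ * (P₂ + P₃) = 0 := by rw [mul_add, h₁₂, h₁₃, add_zero]
  have hR1 : (P₂ + P₃) * P₁ = 0 := by rw [add_mul, h₂₁, h₃₁, add_zero]
  have hxP3 : x * P₃ = 0 := by rw [← hx, mul_assoc, hQ3, mul_zero]
  have hP3x : P₃ * x = 0 := by
    rw [← hx, ← mul_assoc, ← mul_assoc, h3Q, zero_mul, zero_mul]
  have hyP1 : y * P₁ = 0 := by rw [← hy, mul_assoc, hR1, mul_zero]
  have hP1y : P₁ * y = 0 := by
    rw [← hy, ← mul_assoc, ← mul_assoc, h1R, zero_mul, zero_mul]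
  have key : ∀ (P Q : H →L[ℂ] H), ‖P‖ ≤ 1 → ‖Q‖ ≤ 1 → ‖P * (x - y) * Q‖ ≤ ε :=
    fun P Q hP hQ => le_trans (block_norm_le P Q _ hP hQ) hxy
  have b11 : ‖P₁ * x * P₁‖ ≤ ε := by
    have e : P₁ * (x - y) * P₁ = P₁ * x * P₁ := by
      rw [mul_sub, hP1y, sub_zero]
    rw [← e]; exact key P₁ P₁ n1 n1
  have b12 : ‖P₁ * x * P₂‖ ≤ ε := by
    have e : P₁ * (x - y) * P₂ = P₁ * x * P₂ := by
      rw [mul_sub, hP1y, sub_zero]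
    rw [← e]; exact key P₁ P₂ n1 n2
  have b21 : ‖P₂ * x * P₁‖ ≤ ε := by
    have e : P₂ * (x - y) * P₁ = P₂ * x * P₁ := by
      rw [mul_sub, sub_mul, mul_assoc P₂ y P₁, hyP1, mul_zero, sub_zero]
    rw [← e]; exact key P₂ P₁ n2 n1
  have b22 : ‖P₂ * (x - y) * P₂‖ ≤ ε := key P₂ P₂ n2 n2
  have b33 : ‖P₃ * y * P₃‖ ≤ ε := by
    have e : P₃ * (x - y) * P₃ = -(P₃ * y * P₃) := by
      rw [mul_sub, hP3x, zero_sub, neg_mul]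
    have := key P₃ P₃ n3 n3
    rwa [e, norm_neg] at this
  have b23 : ‖P₂ * y * P₃‖ ≤ ε := by
    have e : P₂ * (x - y) * P₃ = -(P₂ * y * P₃) := by
      rw [mul_sub, sub_mul, mul_assoc P₂ x P₃, hxP3, mul_zero, zero_sub]
    have := key P₂ P₃ n2 n3
    rwa [e, norm_neg] at this
  have b32 : ‖P₃ * y * P₂‖ ≤ ε := by
    have e : P₃ * (x - y) * P₂ = -(P₃ * y * P₂) := by
      rw [mul_sub, hP3x, zero_sub, neg_mul]
    have := key P₃ P₂ n3 n2
    rwa [e, norm_neg] at this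
  have bhalf : ‖(2 : ℂ)⁻¹ • (P₂ * (x - y) * P₂)‖ ≤ ε := by
    rw [norm_smul]
    have h2 : ‖(2 : ℂ)⁻¹‖ = 2⁻¹ := by norm_num
    rw [h2]
    nlinarith [norm_nonneg (P₂ * (x - y) * P₂)]
  have hx4 : x = P₁ * x * P₁ + P₁ * x * P₂ + P₂ * x * P₁ + P₂ * x * P₂ := by
    conv_lhs => rw [← hx]
    noncomm_ring
  have hy4 : y = P₂ * y * P₂ + P₂ * y * P₃ + P₃ * y * P₂ + P₃ * y * P₃ := by
    conv_lhs => rw [← hy]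
    noncomm_ring
  have e1 : P₂ * (x + y) * P₂ = P₂ * x * P₂ + P₂ * y * P₂ := by noncomm_ring
  have e2 : P₂ * (x - y) * P₂ = P₂ * x * P₂ - P₂ * y * P₂ := by noncomm_ring
  have decx : x - (2 : ℂ)⁻¹ • (P₂ * (x + y) * P₂) =
      P₁ * x * P₁ + P₁ * x * P₂ + P₂ * x * P₁ + (2 : ℂ)⁻¹ • (P₂ * (x - y) * P₂) := by
    rw [e1, e2]
    nth_rewrite 1 [hx4]
    module
  have decy : y - (2 : ℂ)⁻¹ • (P₂ * (x + y) * P₂) =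
      P₃ * y * P₃ + P₂ * y * P₃ + P₃ * y * P₂ - (2 : ℂ)⁻¹ • (P₂ * (x - y) * P₂) := by
    rw [e1, e2]
    nth_rewrite 1 [hy4]
    module
  constructor
  · rw [decx]
    have := norm_add4_le (P₁ * x * P₁) (P₁ * x * P₂) (P₂ * x * P₁)
      ((2 : ℂ)⁻¹ • (P₂ * (x - y) * P₂))
    linarith
  · rw [decy]
    have h1 : ‖P₃ * y * P₃ + P₂ * y * P₃ + P₃ * y * P₂ - (2 : ℂ)⁻¹ • (P₂ * (x - y) * P₂)‖
        ≤ ‖P₃ * y * P₃ + P₂ * y * P₃ + P₃ * y * P₂‖ + ‖(2 : ℂ)⁻¹ • (P₂ * (x - y) * P₂)‖ :=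
      norm_sub_le _ _
    have h2 : ‖P₃ * y * P₃ + P₂ * y * P₃ + P₃ * y * P₂‖
        ≤ ‖P₃ * y * P₃ + P₂ * y * P₃‖ + ‖P₃ * y * P₂‖ := norm_add_le _ _
    have h3 : ‖P₃ * y * P₃ + P₂ * y * P₃‖ ≤ ‖P₃ * y * P₃‖ + ‖P₂ * y * P₃‖ := norm_add_le _ _
    linarith
end

section
/- Let A be a unital C*-algebra and u, v ∈ A two ε-quasi-unitaries (i.e., ‖u*u−1‖ < ε, ‖uu*−1‖ < ε, and similarly for v) with 0 < ε < 1/4. Then in M₂(A), the path t ↦ diag(u, 1) · R(t) · diag(1, v) · R(t)*, where R(t) is the rotation matrix [[cos(πt/2), −sin(πt/2)], [sin(πt/2), cos(πt/2)]], is a norm-continuous path of 3ε-quasi-unitaries from diag(u, v) (at t = 0) to diag(uv, 1) (at t = 1). -/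
open ContinuousLinearMap

variable {H : Type*} [NormedAddCommGroup H] [InnerProductSpace ℂ H]

/-- The 2×2 block operator `[[a, b], [c, d]]` on the Hilbert space `H ⊕ H`
(with its ℓ²-sum inner product), realizing `M₂(B(H))` as operators. -/
noncomputable def blk (a b c d : H →L[ℂ] H) :
    WithLp 2 (H × H) →L[ℂ] WithLp 2 (H × H) :=
  (((WithLp.prodContinuousLinearEquiv 2 ℂ H H).symm :
      (H × H) →L[ℂ] WithLp 2 (H × H)) ∘L ((a.coprod b).prod (c.coprod d))) ∘L
    ((WithLp.prodContinuousLinearEquiv 2 ℂ H H : WithLp 2 (H × H) ≃L[ℂ] (H × H)) :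
      WithLp 2 (H × H) →L[ℂ] (H × H))

/-- The rotation homotopy `t ↦ diag(u,1)·R(t)·diag(1,v)·R(t)*` in `M₂(B(H))`,
where `R(t)` is the rotation by `πt/2`. -/
noncomputable def rotationPath (u v : H →L[ℂ] H) (t : ℝ) :
    WithLp 2 (H × H) →L[ℂ] WithLp 2 (H × H) :=
  blk u 0 0 1 *
    blk ((Real.cos (Real.pi * t / 2) : ℂ) • 1) (-((Real.sin (Real.pi * t / 2) : ℂ) • 1))
      ((Real.sin (Real.pi * t / 2) : ℂ) • 1) ((Real.cos (Real.pi * t / 2) : ℂ) • 1) *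
    blk 1 0 0 v *
    blk ((Real.cos (Real.pi * t / 2) : ℂ) • 1) ((Real.sin (Real.pi * t / 2) : ℂ) • 1)
      (-((Real.sin (Real.pi * t / 2) : ℂ) • 1)) ((Real.cos (Real.pi * t / 2) : ℂ) • 1)

/-! ### auxiliary lemmas -/

lemma key_identity₁ {M : Type*} [Ring M] [StarRing M] (D₁ D₂ R : M)
    (hRR : star R * R = 1) (hRsR : R * star R = 1) :
    star (D₁ * R * D₂ * star R) * (D₁ * R * D₂ * star R) - 1 =
      R * (star D₂ * D₂ - 1) * star R +
        (R * star D₂ * star R) * (star D₁ * D₁ - 1) * (R * D₂ * star R) := by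
  have hRR' : ∀ x : M, star R * (R * x) = x := fun x => by rw [← mul_assoc, hRR, one_mul]
  have hRsR' : ∀ x : M, R * (star R * x) = x := fun x => by rw [← mul_assoc, hRsR, one_mul]
  simp only [star_mul, star_star, mul_sub, sub_mul, mul_one, one_mul, mul_assoc,
    hRR', hRsR', hRR, hRsR]
  abel

lemma key_identity₂ {M : Type*} [Ring M] [StarRing M] (D₁ D₂ R : M)
    (hRR : star R * R = 1) (hRsR : R * star R = 1) :
    (D₁ * R * D₂ * star R) * star (D₁ * R * D₂ * star R) - 1 =
      (D₁ * star D₁ - 1) + D₁ * (R * (D₂ * star D₂ - 1) * star R) * star D₁ := by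
  have hRR' : ∀ x : M, star R * (R * x) = x := fun x => by rw [← mul_assoc, hRR, one_mul]
  have hRsR' : ∀ x : M, R * (star R * x) = x := fun x => by rw [← mul_assoc, hRsR, one_mul]
  simp only [star_mul, star_star, mul_sub, sub_mul, mul_one, one_mul, mul_assoc,
    hRR', hRsR', hRR, hRsR]
  abel

lemma key_norm {M : Type*} [NormedRing M] (x m z : M) (a b : ℝ)
    (hx : ‖x‖ ≤ a) (hz : ‖z‖ ≤ b) : ‖x * m * z‖ ≤ a * ‖m‖ * b := by
  have h1 : ‖x * m‖ ≤ a * ‖m‖ :=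
    le_trans (norm_mul_le _ _) (mul_le_mul_of_nonneg_right hx (norm_nonneg m))
  calc ‖x * m * z‖ ≤ ‖x * m‖ * ‖z‖ := norm_mul_le _ _
    _ ≤ (a * ‖m‖) * b :=
        mul_le_mul h1 hz (norm_nonneg z) (le_trans (norm_nonneg _) h1)

lemma blk_apply_fst (a b c d : H →L[ℂ] H) (x : WithLp 2 (H × H)) :
    (blk a b c d x).fst = a x.fst + b x.snd := rfl
lemma blk_apply_snd (a b c d : H →L[ℂ] H) (x : WithLp 2 (H × H)) :
    (blk a b c d x).snd = c x.fst + d x.snd := rfl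

lemma blk_mul (a b c d a' b' c' d' : H →L[ℂ] H) :
    blk a b c d * blk a' b' c' d' =
      blk (a * a' + b * c') (a * b' + b * d') (c * a' + d * c') (c * b' + d * d') := by
  ext x
  refine WithLp.ofLp_injective 2 (Prod.ext ?_ ?_) <;>
    simp [mul_apply, blk_apply_fst, blk_apply_snd, map_add] <;> abel

lemma blk_one : (blk 1 0 0 1 : WithLp 2 (H × H) →L[ℂ] WithLp 2 (H × H)) = 1 := by
  ext x
  refine WithLp.ofLp_injective 2 (Prod.ext ?_ ?_) <;> simp [blk_apply_fst, blk_apply_snd, one_def]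

lemma blk_add (a b c d a' b' c' d' : H →L[ℂ] H) :
    blk a b c d + blk a' b' c' d' = blk (a + a') (b + b') (c + c') (d + d') := by
  ext x
  refine WithLp.ofLp_injective 2 (Prod.ext ?_ ?_) <;> simp [blk_apply_fst, blk_apply_snd] <;> abel

lemma blk_sub (a b c d a' b' c' d' : H →L[ℂ] H) :
    blk a b c d - blk a' b' c' d' = blk (a - a') (b - b') (c - c') (d - d') := by
  ext x
  refine WithLp.ofLp_injective 2 (Prod.ext ?_ ?_) <;> simp [blk_apply_fst, blk_apply_snd] <;> abel

lemma blk_smul (z : ℂ) (a b c d : H →L[ℂ] H) :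
    blk (z • a) (z • b) (z • c) (z • d) = z • blk a b c d := by
  ext x
  refine WithLp.ofLp_injective 2 (Prod.ext ?_ ?_) <;> simp [blk_apply_fst, blk_apply_snd, smul_add]

lemma blk_star [CompleteSpace H] (a b c d : H →L[ℂ] H) :
    star (blk a b c d) = blk (star a) (star c) (star b) (star d) := by
  rw [star_eq_adjoint]
  refine ((ContinuousLinearMap.eq_adjoint_iff _ _).mpr fun x y => ?_).symm
  simp only [WithLp.ofLp_fst, WithLp.ofLp_snd, blk_apply_fst, blk_apply_snd, WithLp.prod_inner_apply, star_eq_adjoint,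
    inner_add_left, inner_add_right, adjoint_inner_left]
  ring

lemma blk_norm_le (a d : H →L[ℂ] H) : ‖blk a 0 0 d‖ ≤ max ‖a‖ ‖d‖ := by
  refine opNorm_le_bound _ (le_max_of_le_left (norm_nonneg a)) fun x => ?_
  have h1 : ‖blk a 0 0 d x‖ ^ 2 ≤ (max ‖a‖ ‖d‖ * ‖x‖) ^ 2 := by
    rw [WithLp.prod_norm_sq_eq_of_L2]
    have hx : ‖x‖ ^ 2 = ‖x.fst‖ ^ 2 + ‖x.snd‖ ^ 2 := WithLp.prod_norm_sq_eq_of_L2 x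
    have ha : ‖(blk a 0 0 d x).fst‖ ≤ ‖a‖ * ‖x.fst‖ := by
      rw [blk_apply_fst]; simpa using a.le_opNorm x.fst
    have hd : ‖(blk a 0 0 d x).snd‖ ≤ ‖d‖ * ‖x.snd‖ := by
      rw [blk_apply_snd]; simpa using d.le_opNorm x.snd
    have ha' : ‖(blk a 0 0 d x).fst‖ ^ 2 ≤ (‖a‖ * ‖x.fst‖) ^ 2 :=
      pow_le_pow_left₀ (norm_nonneg _) ha 2
    have hd' : ‖(blk a 0 0 d x).snd‖ ^ 2 ≤ (‖d‖ * ‖x.snd‖) ^ 2 :=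
      pow_le_pow_left₀ (norm_nonneg _) hd 2
    have h2 : (‖a‖ * ‖x.fst‖) ^ 2 ≤ (max ‖a‖ ‖d‖) ^ 2 * ‖x.fst‖ ^ 2 := by
      rw [mul_pow]; gcongr; exact le_max_left _ _
    have h3 : (‖d‖ * ‖x.snd‖) ^ 2 ≤ (max ‖a‖ ‖d‖) ^ 2 * ‖x.snd‖ ^ 2 := by
      rw [mul_pow]; gcongr; exact le_max_right _ _
    nlinarith [norm_nonneg x.fst, norm_nonneg x.snd]
  have := Real.sqrt_le_sqrt h1
  rwa [Real.sqrt_sq (norm_nonneg _), Real.sqrt_sq (by positivity)] at this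

lemma norm_one_blk_le [CompleteSpace H] :
    ‖(1 : WithLp 2 (H × H) →L[ℂ] WithLp 2 (H × H))‖ ≤ 1 := by
  rw [one_def]; exact norm_id_le

lemma blk_J_norm_le [CompleteSpace H] :
    ‖(blk 0 1 1 0 : WithLp 2 (H × H) →L[ℂ] WithLp 2 (H × H))‖ ≤ 1 := by
  have h1 : star (blk 0 1 1 0 : WithLp 2 (H × H) →L[ℂ] WithLp 2 (H × H)) * blk 0 1 1 0 = 1 := by
    rw [blk_star]; rw [blk_mul]; simp [blk_one]
  have h2 := CStarRing.norm_star_mul_self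
    (x := (blk 0 1 1 0 : WithLp 2 (H × H) →L[ℂ] WithLp 2 (H × H)))
  rw [h1] at h2
  have h3 := norm_one_blk_le (H := H)
  nlinarith [norm_nonneg (blk 0 1 1 0 : WithLp 2 (H × H) →L[ℂ] WithLp 2 (H × H))]

lemma blk_norm_le' [CompleteSpace H] (a b c d : H →L[ℂ] H) :
    ‖blk a b c d‖ ≤ max ‖a‖ ‖d‖ + max ‖b‖ ‖c‖ := by
  have hdecomp : blk a b c d = blk a 0 0 d + blk b 0 0 c * blk 0 1 1 0 := by
    rw [blk_mul, blk_add]; simp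
  rw [hdecomp]
  refine (norm_add_le _ _).trans ?_
  gcongr
  · exact blk_norm_le a d
  · calc ‖blk b 0 0 c * blk 0 1 1 0‖ ≤ ‖blk b 0 0 c‖ * ‖(blk 0 1 1 0 :
          WithLp 2 (H × H) →L[ℂ] WithLp 2 (H × H))‖ := norm_mul_le _ _
      _ ≤ max ‖b‖ ‖c‖ * 1 := mul_le_mul (blk_norm_le b c) blk_J_norm_le (norm_nonneg _)
          (le_max_of_le_left (norm_nonneg _))
      _ = max ‖b‖ ‖c‖ := mul_one _

noncomputable def blkₗ [CompleteSpace H] :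
    ((H →L[ℂ] H) × (H →L[ℂ] H) × (H →L[ℂ] H) × (H →L[ℂ] H)) →ₗ[ℂ]
      (WithLp 2 (H × H) →L[ℂ] WithLp 2 (H × H)) where
  toFun p := blk p.1 p.2.1 p.2.2.1 p.2.2.2
  map_add' _ _ := (blk_add _ _ _ _ _ _ _ _).symm
  map_smul' _ _ := blk_smul _ _ _ _ _

lemma continuous_blk [CompleteSpace H] {X : Type*} [TopologicalSpace X]
    {f g h k : X → H →L[ℂ] H} (hf : Continuous f) (hg : Continuous g)
    (hh : Continuous h) (hk : Continuous k) :
    Continuous fun x => blk (f x) (g x) (h x) (k x) := by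
  have hb : Continuous (blkₗ (H := H)) := by
    refine AddMonoidHomClass.continuous_of_bound (blkₗ (H := H)) 2 fun p => ?_
    simp only [blkₗ, LinearMap.coe_mk, AddHom.coe_mk]
    have h1 : ‖blk p.1 p.2.1 p.2.2.1 p.2.2.2‖ ≤ max ‖p.1‖ ‖p.2.2.2‖ + max ‖p.2.1‖ ‖p.2.2.1‖ :=
      blk_norm_le' _ _ _ _
    have e1 : ‖p.1‖ ≤ ‖p‖ := norm_fst_le p
    have e2 : ‖p.2.1‖ ≤ ‖p‖ := le_trans (norm_fst_le p.2) (norm_snd_le p)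
    have e3 : ‖p.2.2.1‖ ≤ ‖p‖ :=
      le_trans (le_trans (norm_fst_le p.2.2) (norm_snd_le p.2)) (norm_snd_le p)
    have e4 : ‖p.2.2.2‖ ≤ ‖p‖ :=
      le_trans (le_trans (norm_snd_le p.2.2) (norm_snd_le p.2)) (norm_snd_le p)
    calc ‖blk p.1 p.2.1 p.2.2.1 p.2.2.2‖
        ≤ max ‖p.1‖ ‖p.2.2.2‖ + max ‖p.2.1‖ ‖p.2.2.1‖ := h1
      _ ≤ ‖p‖ + ‖p‖ := add_le_add (max_le e1 e4) (max_le e2 e3)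
      _ = 2 * ‖p‖ := by ring
  have := hb.comp (hf.prodMk (hg.prodMk (hh.prodMk hk)))
  simpa [blkₗ, Function.comp_def] using this

lemma smul_one_mul_smul_one (z w : ℂ) :
    (z • (1 : H →L[ℂ] H)) * (w • 1) = (z * w) • 1 := by
  rw [smul_mul_assoc, one_mul, smul_smul]

lemma star_real_smul_one [CompleteSpace H] (c : ℝ) :
    star ((c : ℂ) • (1 : H →L[ℂ] H)) = (c : ℂ) • 1 := by
  rw [star_smul, star_one, Complex.star_def, Complex.conj_ofReal]

lemma rot_mul [CompleteSpace H] (c s : ℝ) (hcs : c ^ 2 + s ^ 2 = 1) :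
    blk ((c : ℂ) • 1) (-((s : ℂ) • 1)) ((s : ℂ) • 1) ((c : ℂ) • (1 : H →L[ℂ] H)) *
      blk ((c : ℂ) • 1) ((s : ℂ) • 1) (-((s : ℂ) • 1)) ((c : ℂ) • 1) = 1 := by
  have h : ((c : ℂ)) * c + (s : ℂ) * s = 1 := by
    have h2 : ((c ^ 2 + s ^ 2 : ℝ) : ℂ) = 1 := by rw [hcs]; norm_num
    push_cast at h2; linear_combination h2
  rw [blk_mul, ← blk_one]
  congr 1 <;>
    simp only [mul_neg, neg_mul, neg_neg, smul_one_mul_smul_one] <;>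
    match_scalars <;>
    first
      | linear_combination h
      | ring1

lemma rot_mul' [CompleteSpace H] (c s : ℝ) (hcs : c ^ 2 + s ^ 2 = 1) :
    blk ((c : ℂ) • 1) ((s : ℂ) • 1) (-((s : ℂ) • 1)) ((c : ℂ) • (1 : H →L[ℂ] H)) *
      blk ((c : ℂ) • 1) (-((s : ℂ) • 1)) ((s : ℂ) • 1) ((c : ℂ) • 1) = 1 := by
  have h : ((c : ℂ)) * c + (s : ℂ) * s = 1 := by
    have h2 : ((c ^ 2 + s ^ 2 : ℝ) : ℂ) = 1 := by rw [hcs]; norm_num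
    push_cast at h2; linear_combination h2
  rw [blk_mul, ← blk_one]
  congr 1 <;>
    simp only [mul_neg, neg_mul, neg_neg, smul_one_mul_smul_one] <;>
    match_scalars <;>
    first
      | linear_combination h
      | ring1

/-! ### the rotation block -/

noncomputable def rotBlk (t : ℝ) : WithLp 2 (H × H) →L[ℂ] WithLp 2 (H × H) :=
  blk ((Real.cos (Real.pi * t / 2) : ℂ) • 1) (-((Real.sin (Real.pi * t / 2) : ℂ) • 1))
    ((Real.sin (Real.pi * t / 2) : ℂ) • 1) ((Real.cos (Real.pi * t / 2) : ℂ) • 1)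

lemma star_rotBlk [CompleteSpace H] (t : ℝ) :
    star (rotBlk (H := H) t) =
      blk ((Real.cos (Real.pi * t / 2) : ℂ) • 1) ((Real.sin (Real.pi * t / 2) : ℂ) • 1)
        (-((Real.sin (Real.pi * t / 2) : ℂ) • 1)) ((Real.cos (Real.pi * t / 2) : ℂ) • 1) := by
  rw [rotBlk, blk_star, star_neg, star_real_smul_one, star_real_smul_one]

lemma rotationPath_eq [CompleteSpace H] (u v : H →L[ℂ] H) (t : ℝ) :
    rotationPath u v t = blk u 0 0 1 * rotBlk t * blk 1 0 0 v * star (rotBlk t) := by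
  rw [rotationPath, star_rotBlk, rotBlk]

lemma rotBlk_mul_star [CompleteSpace H] (t : ℝ) :
    rotBlk (H := H) t * star (rotBlk t) = 1 := by
  rw [star_rotBlk, rotBlk]
  exact rot_mul _ _ (Real.cos_sq_add_sin_sq _)

lemma star_mul_rotBlk [CompleteSpace H] (t : ℝ) :
    star (rotBlk (H := H) t) * rotBlk t = 1 := by
  rw [star_rotBlk, rotBlk]
  exact rot_mul' _ _ (Real.cos_sq_add_sin_sq _)

lemma norm_rotBlk_le [CompleteSpace H] (t : ℝ) : ‖rotBlk (H := H) t‖ ≤ 1 := by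
  have h2 := CStarRing.norm_star_mul_self (x := rotBlk (H := H) t)
  rw [star_mul_rotBlk] at h2
  have h3 := norm_one_blk_le (H := H)
  nlinarith [norm_nonneg (rotBlk (H := H) t)]

lemma norm_star_rotBlk_le [CompleteSpace H] (t : ℝ) : ‖star (rotBlk (H := H) t)‖ ≤ 1 := by
  have h2 := CStarRing.norm_star_mul_self (x := star (rotBlk (H := H) t))
  rw [star_star, rotBlk_mul_star] at h2
  have h3 := norm_one_blk_le (H := H)
  nlinarith [norm_nonneg (star (rotBlk (H := H) t))]

lemma continuous_rotBlk [CompleteSpace H] : Continuous (rotBlk (H := H)) := by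
  have hlin : Continuous fun t : ℝ => Real.pi * t / 2 :=
    (continuous_const.mul continuous_id).div_const 2
  have hcos : Continuous fun t : ℝ => ((Real.cos (Real.pi * t / 2) : ℝ) : ℂ) • (1 : H →L[ℂ] H) :=
    (Complex.continuous_ofReal.comp (Real.continuous_cos.comp hlin)).smul continuous_const
  have hsin : Continuous fun t : ℝ => ((Real.sin (Real.pi * t / 2) : ℝ) : ℂ) • (1 : H →L[ℂ] H) :=
    (Complex.continuous_ofReal.comp (Real.continuous_sin.comp hlin)).smul continuous_const
  exact continuous_blk hcos hsin.neg hsin hcos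

/-! ### quasi-unitary norm estimates -/

lemma norm_sq_le_of_quasi [CompleteSpace H] {u : H →L[ℂ] H} {ε : ℝ}
    (h : ‖star u * u - 1‖ < ε) : ‖u‖ * ‖u‖ ≤ 1 + ε := by
  have h1 : ‖star u * u‖ = ‖u‖ * ‖u‖ := CStarRing.norm_star_mul_self
  have h2 : ‖star u * u‖ ≤ ‖star u * u - 1‖ + ‖(1 : H →L[ℂ] H)‖ := by
    simpa using norm_add_le (star u * u - 1) 1
  have h3 : ‖(1 : H →L[ℂ] H)‖ ≤ 1 := by rw [one_def]; exact norm_id_le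
  linarith

lemma norm_blk_diag_sq [CompleteSpace H] {a d : H →L[ℂ] H} {ε : ℝ} (hε : 0 ≤ ε)
    (ha : ‖a‖ * ‖a‖ ≤ 1 + ε) (hd : ‖d‖ * ‖d‖ ≤ 1 + ε) :
    ‖blk a 0 0 d‖ * ‖blk a 0 0 d‖ ≤ 1 + ε := by
  have h := blk_norm_le a d
  rcases le_total ‖a‖ ‖d‖ with hh | hh
  · have h2 : ‖blk a 0 0 d‖ ≤ ‖d‖ := h.trans (max_le hh le_rfl)
    nlinarith [norm_nonneg (blk a 0 0 d), norm_nonneg d]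
  · have h2 : ‖blk a 0 0 d‖ ≤ ‖a‖ := h.trans (max_le le_rfl hh)
    nlinarith [norm_nonneg (blk a 0 0 d), norm_nonneg a]

lemma diag_err₁ [CompleteSpace H] (u : H →L[ℂ] H) :
    star (blk u 0 0 1) * blk u 0 0 1 - 1 = blk (star u * u - 1) 0 0 0 := by
  rw [blk_star, star_zero, star_one, blk_mul, ← blk_one, blk_sub]
  norm_num

lemma diag_err₂ [CompleteSpace H] (u : H →L[ℂ] H) :
    blk u 0 0 1 * star (blk u 0 0 1) - 1 = blk (u * star u - 1) 0 0 0 := by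
  rw [blk_star, star_zero, star_one, blk_mul, ← blk_one, blk_sub]
  norm_num

lemma diag_err₃ [CompleteSpace H] (v : H →L[ℂ] H) :
    star (blk 1 0 0 v) * blk 1 0 0 v - 1 = blk 0 0 0 (star v * v - 1) := by
  rw [blk_star, star_zero, star_one, blk_mul, ← blk_one, blk_sub]
  norm_num

lemma diag_err₄ [CompleteSpace H] (v : H →L[ℂ] H) :
    blk 1 0 0 v * star (blk 1 0 0 v) - 1 = blk 0 0 0 (v * star v - 1) := by
  rw [blk_star, star_zero, star_one, blk_mul, ← blk_one, blk_sub]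
  norm_num

lemma blk_corner_norm_le₁ (x : H →L[ℂ] H) : ‖blk x 0 0 0‖ ≤ ‖x‖ :=
  (blk_norm_le x 0).trans (by simp)

lemma norm_star_blk [CompleteSpace H] (a : WithLp 2 (H × H) →L[ℂ] WithLp 2 (H × H)) :
    ‖star a‖ = ‖a‖ := norm_star a

lemma blk_corner_norm_le₂ (x : H →L[ℂ] H) : ‖blk 0 0 0 x‖ ≤ ‖x‖ :=
  (blk_norm_le 0 x).trans (by simp)

set_option maxHeartbeats 2000000 in
/-- The rotation path is a norm-continuous path of 3ε-quasi-unitaries from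
`diag(u, v)` to `diag(uv, 1)`. -/
theorem rotationPath_quasi_unitary [CompleteSpace H]
    (ε : ℝ) (hε0 : 0 < ε) (hε : ε < 1 / 4) (u v : H →L[ℂ] H)
    (hu1 : ‖star u * u - 1‖ < ε) (hu2 : ‖u * star u - 1‖ < ε)
    (hv1 : ‖star v * v - 1‖ < ε) (hv2 : ‖v * star v - 1‖ < ε) :
    (∀ t ∈ Set.Icc (0 : ℝ) 1,
      ‖star (rotationPath u v t) * rotationPath u v t - 1‖ < 3 * ε ∧
      ‖rotationPath u v t * star (rotationPath u v t) - 1‖ < 3 * ε) ∧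
    ContinuousOn (rotationPath u v) (Set.Icc (0 : ℝ) 1) ∧
    rotationPath u v 0 = blk u 0 0 v ∧
    rotationPath u v 1 = blk (u * v) 0 0 1 := by

  have honeH : ‖(1 : H →L[ℂ] H)‖ ≤ 1 := by rw [one_def]; exact norm_id_le
  have h1sq : ‖(1 : H →L[ℂ] H)‖ * ‖(1 : H →L[ℂ] H)‖ ≤ 1 + ε := by nlinarith [norm_nonneg (1 : H →L[ℂ] H)]
  have hD1sq : ‖blk u 0 0 (1 : H →L[ℂ] H)‖ * ‖blk u 0 0 (1 : H →L[ℂ] H)‖ ≤ 1 + ε :=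
    norm_blk_diag_sq hε0.le (norm_sq_le_of_quasi hu1) h1sq
  have hD2sq : ‖blk (1 : H →L[ℂ] H) 0 0 v‖ * ‖blk (1 : H →L[ℂ] H) 0 0 v‖ ≤ 1 + ε :=
    norm_blk_diag_sq hε0.le h1sq (norm_sq_le_of_quasi hv1)
  refine ⟨fun t _ => ?_, ?_, ?_, ?_⟩
  · have hWt := rotationPath_eq u v t
    have hRR := star_mul_rotBlk (H := H) t
    have hRsR := rotBlk_mul_star (H := H) t
    constructor
    · rw [hWt, key_identity₁ _ _ _ hRR hRsR, diag_err₃, diag_err₁]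
      refine lt_of_le_of_lt (norm_add_le _ _) ?_
      have t1 : ‖rotBlk t * blk 0 0 0 (star v * v - 1) * star (rotBlk t)‖ ≤
          1 * ‖blk (0 : H →L[ℂ] H) 0 0 (star v * v - 1)‖ * 1 :=
        key_norm _ _ _ _ _ (norm_rotBlk_le t) (norm_star_rotBlk_le t)
      have hx : ‖rotBlk t * star (blk 1 0 0 v) * star (rotBlk t)‖ ≤ ‖blk (1 : H →L[ℂ] H) 0 0 v‖ := by
        have h := key_norm (rotBlk (H := H) t) (star (blk 1 0 0 v)) (star (rotBlk t)) 1 1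
          (norm_rotBlk_le t) (norm_star_rotBlk_le t)
        rwa [one_mul, mul_one, norm_star_blk] at h
      have hz : ‖rotBlk t * blk 1 0 0 v * star (rotBlk t)‖ ≤ ‖blk (1 : H →L[ℂ] H) 0 0 v‖ := by
        have h := key_norm (rotBlk (H := H) t) (blk 1 0 0 v) (star (rotBlk t)) 1 1
          (norm_rotBlk_le t) (norm_star_rotBlk_le t)
        rwa [one_mul, mul_one] at h
      have t2 : ‖rotBlk t * star (blk 1 0 0 v) * star (rotBlk t) * blk (star u * u - 1) 0 0 0 *
            (rotBlk t * blk 1 0 0 v * star (rotBlk t))‖ ≤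
          ‖blk (1 : H →L[ℂ] H) 0 0 v‖ * ‖blk (star u * u - 1) 0 0 (0 : H →L[ℂ] H)‖ *
            ‖blk (1 : H →L[ℂ] H) 0 0 v‖ :=
        key_norm _ _ _ _ _ hx hz
      have hEb : ‖blk (star u * u - 1) 0 0 (0 : H →L[ℂ] H)‖ ≤ ε :=
        ((blk_corner_norm_le₁ _).trans hu1.le)
      have hFb : ‖blk (0 : H →L[ℂ] H) 0 0 (star v * v - 1)‖ < ε :=
        lt_of_le_of_lt (blk_corner_norm_le₂ _) hv1
      have t3 : ‖blk (1 : H →L[ℂ] H) 0 0 v‖ * ‖blk (star u * u - 1) 0 0 (0 : H →L[ℂ] H)‖ *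
          ‖blk (1 : H →L[ℂ] H) 0 0 v‖ ≤ (1 + ε) * ε := by
        calc ‖blk (1 : H →L[ℂ] H) 0 0 v‖ * ‖blk (star u * u - 1) 0 0 (0 : H →L[ℂ] H)‖ *
              ‖blk (1 : H →L[ℂ] H) 0 0 v‖
            = (‖blk (1 : H →L[ℂ] H) 0 0 v‖ * ‖blk (1 : H →L[ℂ] H) 0 0 v‖) *
              ‖blk (star u * u - 1) 0 0 (0 : H →L[ℂ] H)‖ := by ring
          _ ≤ (1 + ε) * ε :=
              mul_le_mul hD2sq hEb (norm_nonneg _) (by positivity)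
      nlinarith [norm_nonneg (blk (0 : H →L[ℂ] H) 0 0 (star v * v - 1))]
    · rw [hWt, key_identity₂ _ _ _ hRR hRsR, diag_err₄, diag_err₂]
      refine lt_of_le_of_lt (norm_add_le _ _) ?_
      have hE : ‖blk (u * star u - 1) 0 0 (0 : H →L[ℂ] H)‖ < ε :=
        lt_of_le_of_lt (blk_corner_norm_le₁ _) hu2
      have t1 : ‖rotBlk t * blk 0 0 0 (v * star v - 1) * star (rotBlk t)‖ ≤
          1 * ‖blk (0 : H →L[ℂ] H) 0 0 (v * star v - 1)‖ * 1 :=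
        key_norm _ _ _ _ _ (norm_rotBlk_le t) (norm_star_rotBlk_le t)
      have hFb : ‖blk (0 : H →L[ℂ] H) 0 0 (v * star v - 1)‖ ≤ ε :=
        (blk_corner_norm_le₂ _).trans hv2.le
      have hsD1 : ‖star (blk u 0 0 (1 : H →L[ℂ] H))‖ = ‖blk u 0 0 (1 : H →L[ℂ] H)‖ :=
        norm_star_blk _
      have t2 : ‖blk u 0 0 1 * (rotBlk t * blk 0 0 0 (v * star v - 1) * star (rotBlk t)) *
            star (blk u 0 0 1)‖ ≤
          ‖blk u 0 0 (1 : H →L[ℂ] H)‖ *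
            ‖rotBlk t * blk 0 0 0 (v * star v - 1) * star (rotBlk t)‖ *
            ‖blk u 0 0 (1 : H →L[ℂ] H)‖ :=
        key_norm _ _ _ _ _ le_rfl hsD1.le
      have t3 : ‖rotBlk t * blk 0 0 0 (v * star v - 1) * star (rotBlk t)‖ ≤ ε := by
        have := t1
        rw [one_mul, mul_one] at this
        exact this.trans hFb
      have t4 : ‖blk u 0 0 (1 : H →L[ℂ] H)‖ *
            ‖rotBlk t * blk 0 0 0 (v * star v - 1) * star (rotBlk t)‖ *
            ‖blk u 0 0 (1 : H →L[ℂ] H)‖ ≤ (1 + ε) * ε := by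
        calc ‖blk u 0 0 (1 : H →L[ℂ] H)‖ *
              ‖rotBlk t * blk 0 0 0 (v * star v - 1) * star (rotBlk t)‖ *
              ‖blk u 0 0 (1 : H →L[ℂ] H)‖
            = (‖blk u 0 0 (1 : H →L[ℂ] H)‖ * ‖blk u 0 0 (1 : H →L[ℂ] H)‖) *
              ‖rotBlk t * blk 0 0 0 (v * star v - 1) * star (rotBlk t)‖ := by ring
          _ ≤ (1 + ε) * ε := mul_le_mul hD1sq t3 (norm_nonneg _) (by positivity)
      nlinarith
  · have : Continuous (rotationPath u v) := by
      have heq : rotationPath u v = fun t =>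
          blk u 0 0 1 * rotBlk t * blk 1 0 0 v * star (rotBlk t) := by
        funext t; exact rotationPath_eq u v t
      rw [heq]
      exact ((continuous_const.mul continuous_rotBlk).mul continuous_const).mul
        (by have h := (@continuous_star _ _ _ NormedStarGroup.to_continuousStar).comp (continuous_rotBlk (H := H)); exact h)
    exact this.continuousOn
  · have h0 : rotBlk (H := H) 0 = 1 := by
      rw [rotBlk]
      norm_num [blk_one]
    rw [rotationPath_eq, h0, star_one, mul_one, mul_one, blk_mul]
    norm_num
  · have h1 : rotBlk (H := H) 1 = blk 0 (-1) 1 0 := by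
      rw [rotBlk]
      norm_num [Real.cos_pi_div_two, Real.sin_pi_div_two]
    have hs1 : star (rotBlk (H := H) 1) = blk 0 1 (-1) 0 := by
      rw [h1, blk_star, star_neg, star_one, star_zero]
    rw [rotationPath_eq, hs1, h1, blk_mul, blk_mul, blk_mul]
    norm_num [neg_mul, mul_neg, neg_neg]
end

section
/- Let A be a unital C*-algebra, 0 < ε < 1/4, and let u be an ε-quasi-unitary in A (‖u*u − 1‖ < ε, ‖uu* − 1‖ < ε). Let w = u(u*u)^{−1/2} be its unitary part. Then ‖u − w‖ < ε, and the linear path from u to w consists of 6ε-quasi-unitaries. -/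
set_option maxHeartbeats 2000000 in
/-- An ε-quasi-unitary u is within ε of its unitary part w = u(u*u)^{-1/2},
and the linear path from u to w consists of 6ε-quasi-unitaries. -/
theorem quasi_unitary_close_to_unitary_part
    {A : Type*} [CStarAlgebra A]
    (ε : ℝ) (hε0 : 0 < ε) (hε : ε < 1 / 4) (u : A)
    (h1 : ‖star u * u - 1‖ < ε) (h2 : ‖u * star u - 1‖ < ε) :
    u * cfc (fun x : ℝ => (Real.sqrt x)⁻¹) (star u * u) ∈ unitary A ∧
    ‖u - u * cfc (fun x : ℝ => (Real.sqrt x)⁻¹) (star u * u)‖ < ε ∧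
    ∀ t : ℝ, t ∈ Set.Icc (0 : ℝ) 1 →
      ‖star ((t : ℂ) • u + ((1 - t : ℝ) : ℂ) •
            (u * cfc (fun x : ℝ => (Real.sqrt x)⁻¹) (star u * u))) *
          ((t : ℂ) • u + ((1 - t : ℝ) : ℂ) •
            (u * cfc (fun x : ℝ => (Real.sqrt x)⁻¹) (star u * u))) - 1‖ < 6 * ε ∧
      ‖((t : ℂ) • u + ((1 - t : ℝ) : ℂ) •
            (u * cfc (fun x : ℝ => (Real.sqrt x)⁻¹) (star u * u))) *
          star ((t : ℂ) • u + ((1 - t : ℝ) : ℂ) •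
            (u * cfc (fun x : ℝ => (Real.sqrt x)⁻¹) (star u * u))) - 1‖ < 6 * ε := by
  obtain hA | hA := subsingleton_or_nontrivial A
  · have h0 : ∀ z : A, ‖z‖ = 0 := fun z => by rw [Subsingleton.elim z 0, norm_zero]
    refine ⟨Unitary.mem_iff.mpr ⟨Subsingleton.elim _ _, Subsingleton.elim _ _⟩, ?_, ?_⟩
    · rw [h0]; exact hε0
    · intro t ht
      constructor <;> · rw [h0]; linarith
  set f : ℝ → ℝ := fun x => (Real.sqrt x)⁻¹ with hf_def
  set a : A := star u * u with ha_def
  have ha : IsSelfAdjoint a := IsSelfAdjoint.star_mul_self u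
  set δ : ℝ := ‖a - 1‖ with hδ_def
  have hδε : δ < ε := h1
  have hδ0 : (0:ℝ) ≤ δ := norm_nonneg _
  have hδ1 : δ < 1/4 := lt_trans hδε hε
  -- spectrum of a is contained in [1-δ, 1+δ]
  have hspec : ∀ x ∈ spectrum ℝ a, |x - 1| ≤ δ := by
    intro x hx
    have hmem : x - 1 ∈ spectrum ℝ (a - algebraMap ℝ A 1) := by
      rw [← spectrum.sub_singleton_eq]
      exact Set.sub_mem_sub hx rfl
    have := spectrum.norm_le_norm_of_mem hmem
    simpa [Real.norm_eq_abs] using this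
  have hxpos : ∀ x ∈ spectrum ℝ a, (1:ℝ)/2 ≤ x := by
    intro x hx
    have := abs_le.mp (hspec x hx)
    linarith [this.1]
  have hsqrt_pos : ∀ x ∈ spectrum ℝ a, 0 < Real.sqrt x := fun x hx =>
    Real.sqrt_pos.mpr (by linarith [hxpos x hx])
  have hsqrt : ∀ x ∈ spectrum ℝ a, |Real.sqrt x - 1| ≤ δ := by
    intro x hx
    have hx0 : (0:ℝ) ≤ x := by linarith [hxpos x hx]
    have hs : Real.sqrt x * Real.sqrt x = x := Real.mul_self_sqrt hx0
    have h1' : |Real.sqrt x - 1| ≤ |x - 1| := by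
      calc |Real.sqrt x - 1| = |Real.sqrt x - 1| * 1 := (mul_one _).symm
        _ ≤ |Real.sqrt x - 1| * (Real.sqrt x + 1) := by
            apply mul_le_mul_of_nonneg_left _ (abs_nonneg _)
            nlinarith [Real.sqrt_nonneg x]
        _ = |(Real.sqrt x - 1) * (Real.sqrt x + 1)| := by
            rw [abs_mul, abs_of_nonneg (by positivity : (0:ℝ) ≤ Real.sqrt x + 1)]
        _ = |x - 1| := by rw [show (Real.sqrt x - 1) * (Real.sqrt x + 1) = x - 1 by nlinarith]
    exact h1'.trans (hspec x hx)
  have hf_cont : ContinuousOn f (spectrum ℝ a) :=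
    ContinuousOn.inv₀ Real.continuous_sqrt.continuousOn
      (fun x hx => ne_of_gt (hsqrt_pos x hx))
  set b : A := cfc f a with hb_def
  have hb_sa : IsSelfAdjoint b := cfc_predicate f a
  -- helper : cfc h a * a = cfc (h * id) a
  have mulid : ∀ (h : ℝ → ℝ), ContinuousOn h (spectrum ℝ a) →
      cfc (fun x : ℝ => h x * x) a = cfc h a * a := by
    intro h hh
    have := cfc_mul h (fun x : ℝ => x) a hh (continuousOn_id' _)
    rwa [cfc_id' ℝ a] at this
  -- helper : conjugation
  have cfc_conj : ∀ (g : ℝ → ℝ), ContinuousOn g (spectrum ℝ a) →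
      cfc g a * a * cfc g a = cfc (fun x => g x * x * g x) a := by
    intro g hg
    rw [cfc_mul (fun x : ℝ => g x * x) g a (hg.mul (continuousOn_id' _)) hg, mulid g hg]
  -- norm estimate for selfadjoint elements from spectra
  have norm_sub_one_le : ∀ (x : A), IsSelfAdjoint x → ∀ c : ℝ, 0 ≤ c →
      (∀ r ∈ spectrum ℝ x, |r - 1| ≤ c) → ‖x - 1‖ ≤ c := by
    intro x hx c hc hbd
    have e : cfc (fun r : ℝ => r - 1) x = x - 1 := by
      rw [cfc_sub (fun r : ℝ => r) (fun _ => (1:ℝ)) x (continuousOn_id' _) continuousOn_const,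
        cfc_id' ℝ x, cfc_const 1 x, map_one]
    rw [← e]
    exact norm_cfc_le hc fun r hr => by simpa [Real.norm_eq_abs] using hbd r hr
  -- unit stuff
  have ha_unit : IsUnit a := by
    have h' : ‖1 - a‖ < 1 := by rw [norm_sub_rev]; linarith
    exact ⟨Units.oneSub (1 - a) h', by simp⟩
  have hua_unit : IsUnit (u * star u) := by
    have h' : ‖1 - u * star u‖ < 1 := by rw [norm_sub_rev]; linarith
    exact ⟨Units.oneSub (1 - u * star u) h', by simp⟩
  have hu_unit : IsUnit u := by
    obtain ⟨x, hx⟩ := ha_unit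
    obtain ⟨y, hy⟩ := hua_unit
    have hl : ((x⁻¹ : Aˣ) : A) * star u * u = 1 := by
      rw [mul_assoc, ← ha_def, ← hx]; exact x.inv_mul
    have hr : u * (star u * ((y⁻¹ : Aˣ) : A)) = 1 := by
      rw [← mul_assoc, ← hy]; exact y.mul_inv
    have hlr : ((x⁻¹ : Aˣ) : A) * star u = star u * ((y⁻¹ : Aˣ) : A) :=
      left_inv_eq_right_inv hl hr
    exact ⟨⟨u, ((x⁻¹ : Aˣ) : A) * star u, by rw [hlr]; exact hr, hl⟩, rfl⟩
  have hb_unit : IsUnit b := isUnit_cfc f a hf_cont ha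
    (fun x hx => by exact inv_ne_zero (ne_of_gt (hsqrt_pos x hx)))
  -- w := u * b is unitary
  have hsww : star (u * b) * (u * b) = 1 := by
    have : star (u * b) * (u * b) = b * a * b := by
      rw [star_mul, hb_sa.star_eq]
      rw [mul_assoc, ← mul_assoc (star u) u b, ← ha_def, ← mul_assoc]
    rw [this, cfc_conj f hf_cont]
    have : (spectrum ℝ a).EqOn (fun x => f x * x * f x) (fun _ => (1:ℝ)) := by
      intro x hx
      have hs := hsqrt_pos x hx
      have hx0 : (0:ℝ) ≤ x := by linarith [hxpos x hx]
      have : Real.sqrt x * Real.sqrt x = x := Real.mul_self_sqrt hx0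
      simp only [hf_def]
      field_simp
      rw [sq, this]
    rw [cfc_congr this, cfc_const 1 a, map_one]
  have hw_unit : IsUnit (u * b) := hu_unit.mul hb_unit
  have hwws : (u * b) * star (u * b) = 1 := by
    obtain ⟨W, hW⟩ := hw_unit
    have hinv : star (u * b) = ((W⁻¹ : Aˣ) : A) := by
      have : star (u * b) * ((W : A) * ((W⁻¹ : Aˣ) : A)) = star (u * b) := by
        rw [W.mul_inv, mul_one]
      rw [← this, hW, ← mul_assoc, hsww, one_mul]
    rw [hinv, ← hW]; exact W.mul_inv
  have hw_mem : u * b ∈ unitary A := Unitary.mem_iff.mpr ⟨hsww, hwws⟩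
  -- distance estimate
  have hdist : ‖u - u * b‖ < ε := by
    have e : u - u * b = u * cfc (fun x => 1 - f x) a := by
      rw [cfc_sub (fun _ => (1:ℝ)) f a continuousOn_const hf_cont, cfc_const 1 a, map_one,
        mul_sub, mul_one]
    have hd_cont : ContinuousOn (fun x : ℝ => 1 - f x) (spectrum ℝ a) :=
      continuousOn_const.sub hf_cont
    have hd_sa : IsSelfAdjoint (cfc (fun x : ℝ => 1 - f x) a) := cfc_predicate _ a
    have hsq : ‖u - u * b‖ * ‖u - u * b‖ ≤ δ * δ := by
      rw [← CStarRing.norm_star_mul_self]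
      rw [e, star_mul, hd_sa.star_eq, mul_assoc,
        ← mul_assoc (star u) u _, ← ha_def, ← mul_assoc, cfc_conj _ hd_cont]
      apply norm_cfc_le (by positivity)
      intro x hx
      have hs := hsqrt_pos x hx
      have hx0 : (0:ℝ) ≤ x := by linarith [hxpos x hx]
      have hss : Real.sqrt x * Real.sqrt x = x := Real.mul_self_sqrt hx0
      have hxinv : x * (Real.sqrt x)⁻¹ = Real.sqrt x := by
        field_simp
        rw [sq, hss]
      have hsinv : Real.sqrt x * (Real.sqrt x)⁻¹ = 1 := mul_inv_cancel₀ hs.ne'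
      have key : (1 - f x) * x * (1 - f x) = (Real.sqrt x - 1)^2 := by
        have expand : (1 - f x) * x * (1 - f x)
            = x - 2*(x * (Real.sqrt x)⁻¹) + (x * (Real.sqrt x)⁻¹) * (Real.sqrt x)⁻¹ := by
          simp only [hf_def]; ring
        rw [expand, hxinv, hsinv]
        linear_combination -hss
      rw [Real.norm_eq_abs, key, abs_of_nonneg (sq_nonneg _)]
      have := hsqrt x hx
      nlinarith [abs_le.mp this]
    have : ‖u - u * b‖ ≤ δ := by nlinarith [norm_nonneg (u - u * b)]
    linarith
  refine ⟨hw_mem, hdist, ?_⟩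
  -- path estimates
  rintro t ⟨ht0, ht1⟩
  set g : ℝ → ℝ := fun x => t + (1 - t) * f x with hg_def
  have hg_cont : ContinuousOn g (spectrum ℝ a) :=
    continuousOn_const.add (continuousOn_const.mul hf_cont)
  set c : A := cfc g a with hc_def
  have hc_sa : IsSelfAdjoint c := cfc_predicate g a
  have hdecomp : (t : ℂ) • u + ((1 - t : ℝ) : ℂ) • (u * b) = u * c := by
    have h1c : (t : ℂ) • u = t • u := by
      rw [← algebraMap_smul ℂ t u]; norm_num
    have h2c : ((1 - t : ℝ) : ℂ) • (u * b) = (1 - t) • (u * b) := by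
      rw [← algebraMap_smul ℂ (1 - t) (u * b)]; norm_num
    rw [h1c, h2c, hc_def, hg_def,
      cfc_add a (fun _ => t) (fun x => (1 - t) * f x) continuousOn_const
        (continuousOn_const.mul hf_cont),
      cfc_const t a, cfc_const_mul (1 - t) f a hf_cont, mul_add,
      Algebra.algebraMap_eq_smul_one, mul_smul_comm, mul_one, mul_smul_comm, hb_def]
  set G : ℝ → ℝ := fun x => g x * x * g x with hG_def
  have hG_cont : ContinuousOn G (spectrum ℝ a) := (hg_cont.mul (continuousOn_id' _)).mul hg_cont
  have hGbd : ∀ x ∈ spectrum ℝ a, |G x - 1| ≤ δ * (2 + δ) := by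
    intro x hx
    have hs := hsqrt_pos x hx
    have hx0 : (0:ℝ) ≤ x := by linarith [hxpos x hx]
    have hss : Real.sqrt x * Real.sqrt x = x := Real.mul_self_sqrt hx0
    set s : ℝ := Real.sqrt x with hs_def
    have hxinv : x * s⁻¹ = s := by
      field_simp
      rw [sq, hss]
    have hsinv : s * s⁻¹ = 1 := mul_inv_cancel₀ hs.ne'
    have key : G x = (t * s + (1 - t))^2 := by
      have expand : G x
          = t^2*x + 2*t*(1-t)*(x * s⁻¹) + (1-t)^2*((x * s⁻¹) * s⁻¹) := by
        simp only [hG_def, hg_def, hf_def, ← hs_def]; ring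
      rw [expand, hxinv, hsinv]
      linear_combination (-(t^2)) * hss
    have habs : |t * (s - 1)| ≤ δ := by
      rw [abs_mul, abs_of_nonneg ht0]
      calc t * |s - 1| ≤ 1 * |s - 1| := by
            apply mul_le_mul_of_nonneg_right ht1 (abs_nonneg _)
        _ = |s - 1| := one_mul _
        _ ≤ δ := hsqrt x hx
    rw [key]
    have hr := abs_le.mp habs
    rw [abs_le]
    constructor <;> nlinarith [sq_nonneg (t * (s - 1))]
  have hD0 : (0:ℝ) ≤ δ * (2 + δ) := by positivity
  have hDε : δ * (2 + δ) < 6 * ε := by nlinarith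
  -- star v * v
  have hsvv : star (u * c) * (u * c) = cfc G a := by
    rw [star_mul, hc_sa.star_eq, mul_assoc, ← mul_assoc (star u) u c, ← ha_def, ← mul_assoc,
      cfc_conj g hg_cont]
  have hbound1 : ‖star (u * c) * (u * c) - 1‖ ≤ δ * (2 + δ) := by
    rw [hsvv]
    apply norm_sub_one_le _ (cfc_predicate G a) _ hD0
    intro r hr
    rw [cfc_map_spectrum G a ha hG_cont] at hr
    obtain ⟨x, hx, rfl⟩ := hr
    exact hGbd x hx
  -- v * star v
  have hc_unit : IsUnit c := by
    apply isUnit_cfc g a hg_cont ha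
    intro x hx
    have hs := hsqrt_pos x hx
    have hfx : 0 < f x := by simp only [hf_def]; positivity
    have hgx : 0 < g x := by
      simp only [hg_def]
      have hnn : 0 ≤ (1 - t) * f x := mul_nonneg (by linarith) hfx.le
      rcases eq_or_lt_of_le ht0 with h | h
      · rw [← h]; simpa using hfx
      · linarith
    exact hgx.ne'
  have hv_unit : IsUnit (u * c) := hu_unit.mul hc_unit
  have hvv_unit : IsUnit ((u * c) * star (u * c)) := hv_unit.mul hv_unit.star
  have hswap : (u * c) * star (u * c) = u * (c * (c * star u)) := by
    rw [star_mul, hc_sa.star_eq]; noncomm_ring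
  have hcca : (c * (c * star u)) * u = cfc G a := by
    have e1 : c * (c * star u) * u = c * c * a := by rw [ha_def]; noncomm_ring
    have e2 : cfc (fun x : ℝ => (g x * g x) * x) a = c * c * a := by
      rw [mulid (fun x => g x * g x) (hg_cont.mul hg_cont), cfc_mul g g a hg_cont hg_cont]
    have e3 : cfc (fun x : ℝ => (g x * g x) * x) a = cfc G a := by
      apply cfc_congr
      intro x _
      simp only [hG_def]
      ring
    rw [e1, ← e2, e3]
  have hbound2 : ‖(u * c) * star (u * c) - 1‖ ≤ δ * (2 + δ) := by
    apply norm_sub_one_le _ (IsSelfAdjoint.mul_star_self (u * c)) _ hD0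
    intro r hr
    have hr0 : r ≠ 0 := by
      intro h
      rw [h] at hr
      exact (spectrum.zero_notMem_iff ℝ).mpr hvv_unit hr
    have hrmem : r ∈ spectrum ℝ (cfc G a) := by
      have : r ∈ spectrum ℝ ((u * c) * star (u * c)) \ {0} := ⟨hr, hr0⟩
      rw [hswap] at this
      have hswap2 : spectrum ℝ (u * (c * (c * star u))) \ {0}
          = spectrum ℝ ((c * (c * star u)) * u) \ {0} :=
        spectrum.nonzero_mul_comm u (c * (c * star u))
      rw [hswap2, hcca] at this
      exact this.1
    rw [cfc_map_spectrum G a ha hG_cont] at hrmem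
    obtain ⟨x, hx, rfl⟩ := hrmem
    exact hGbd x hx
  rw [hdecomp]
  exact ⟨lt_of_le_of_lt hbound1 hDε, lt_of_le_of_lt hbound2 hDε⟩
end
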